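/- Let t : Fin n → A × B with n ≥ 1 model a bag relation. The Shannon conditional entropy H(Y∣X) := −Σ_{(a,b)} p(a,b)·log(p(a,b)/p₁(a)) (sum over the image of t, natural logarithm) is zero if and only if t satisfies the FD X→Y. -/
import Mathlib


namespace AFD

open Finset

variable {A B : Type*}

/-- Number of indices with X-value `a`. -/
def c1 {n : ℕ} [DecidableEq A] (t : Fin n → A × B) (a : A) : ℕ :=
  (Finset.univ.filter fun i => (t i).1 = a).card

/-- Number of indices with Y-value `b`. -/
def c2 {n : ℕ} [DecidableEq B] (t : Fin n → A × B) (b : B) : ℕ :=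
  (Finset.univ.filter fun i => (t i).2 = b).card

/-- Number of indices with tuple value `(a, b)`. -/
def cnt {n : ℕ} [DecidableEq A] [DecidableEq B] (t : Fin n → A × B) (a : A) (b : B) : ℕ :=
  (Finset.univ.filter fun i => t i = (a, b)).card

/-- Marginal probability of X-value `a`. -/
noncomputable def p1 {n : ℕ} [DecidableEq A] (t : Fin n → A × B) (a : A) : ℝ :=
  (c1 t a : ℝ) / n

/-- Marginal probability of Y-value `b`. -/
noncomputable def p2 {n : ℕ} [DecidableEq B] (t : Fin n → A × B) (b : B) : ℝ :=
  (c2 t b : ℝ) / n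

/-- Joint probability of `(a, b)`. -/
noncomputable def pJ {n : ℕ} [DecidableEq A] [DecidableEq B] (t : Fin n → A × B)
    (a : A) (b : B) : ℝ :=
  (cnt t a b : ℝ) / n

/-- Conditional probability of Y-value `b` given X-value `a` (with the `0/0 = 0` convention,
which is automatic for real division in Lean). -/
noncomputable def pC {n : ℕ} [DecidableEq A] [DecidableEq B] (t : Fin n → A × B)
    (a : A) (b : B) : ℝ :=
  pJ t a b / p1 t a

/-- The set of distinct X-values. -/
def domX {n : ℕ} [DecidableEq A] (t : Fin n → A × B) : Finset A :=
  Finset.univ.image fun i => (t i).1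

/-- The set of distinct Y-values. -/
def domY {n : ℕ} [DecidableEq B] (t : Fin n → A × B) : Finset B :=
  Finset.univ.image fun i => (t i).2

/-- The set of distinct tuples. -/
def domXY {n : ℕ} [DecidableEq A] [DecidableEq B] (t : Fin n → A × B) : Finset (A × B) :=
  Finset.univ.image t

/-- The probabilistic dependency `pdep(X → Y)`. -/
noncomputable def pdep {n : ℕ} [DecidableEq A] [DecidableEq B] (t : Fin n → A × B) : ℝ :=
  ∑ a ∈ domX t, p1 t a * ∑ b ∈ domY t, (pC t a b) ^ 2

/-- The probabilistic self-dependency `pdep(Y)`. -/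
noncomputable def pdepY {n : ℕ} [DecidableEq B] (t : Fin n → A × B) : ℝ :=
  ∑ b ∈ domY t, (p2 t b) ^ 2

/-- The (X;Y)-permutation of `t` induced by the permutation `σ`. -/
def permRel {n : ℕ} (t : Fin n → A × B) (σ : Equiv.Perm (Fin n)) : Fin n → A × B :=
  fun i => ((t i).1, (t (σ i)).2)

/-- `t` satisfies the functional dependency X → Y. -/
def satFD {n : ℕ} (t : Fin n → A × B) : Prop :=
  ∀ i j, (t i).1 = (t j).1 → (t i).2 = (t j).2

/-- The Shannon conditional entropy `H(Y∣X)` is zero iff `t` satisfies the FD X→Y. -/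
theorem shannon_conditional_entropy_eq_zero_iff_satFD
    {A B : Type*} [DecidableEq A] [DecidableEq B]
    {n : ℕ} (hn : 1 ≤ n) (t : Fin n → A × B) :
    (-∑ ab ∈ domXY t, pJ t ab.1 ab.2 * Real.log (pJ t ab.1 ab.2 / p1 t ab.1)) = 0 ↔
      satFD t := by
  have hn0 : (0:ℝ) < n := by exact_mod_cast hn
  -- filter subset: cnt ≤ c1
  have hsub : ∀ a b, (Finset.univ.filter fun i => t i = (a, b)) ⊆
      (Finset.univ.filter fun i => (t i).1 = a) := by
    intro a b i hi
    simp only [Finset.mem_filter] at *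
    exact ⟨hi.1, by rw [hi.2]⟩
  have hle : ∀ a b, cnt t a b ≤ c1 t a := fun a b => Finset.card_le_card (hsub a b)
  -- each term is nonpositive
  have hterm : ∀ ab ∈ domXY t,
      pJ t ab.1 ab.2 * Real.log (pJ t ab.1 ab.2 / p1 t ab.1) ≤ 0 := by
    intro ab _
    have hpJ : 0 ≤ pJ t ab.1 ab.2 := by
      unfold pJ; positivity
    have hp1nn : 0 ≤ p1 t ab.1 := by unfold p1; positivity
    have hratio : pJ t ab.1 ab.2 / p1 t ab.1 ≤ 1 := by
      rcases eq_or_lt_of_le hp1nn with h | h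
      · rw [← h]; simp
      · rw [div_le_one h]
        unfold pJ p1
        gcongr
        exact_mod_cast hle ab.1 ab.2
    have := Real.log_nonpos (div_nonneg hpJ hp1nn) hratio
    exact mul_nonpos_of_nonneg_of_nonpos hpJ this
  rw [neg_eq_zero, Finset.sum_eq_zero_iff_of_nonpos hterm]
  constructor
  · -- all terms zero → FD
    intro h i j hij
    have hi : t i ∈ domXY t := Finset.mem_image_of_mem t (Finset.mem_univ i)
    have := h (t i) hi
    -- pJ (t i) > 0
    have hcnt : 0 < cnt t (t i).1 (t i).2 := by
      apply Finset.card_pos.mpr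
      exact ⟨i, by simp [Finset.mem_filter]⟩
    have hpJ : 0 < pJ t (t i).1 (t i).2 := by
      unfold pJ; positivity
    have hp1 : 0 < p1 t (t i).1 := by
      unfold p1
      have : 0 < c1 t (t i).1 := lt_of_lt_of_le hcnt (hle _ _)
      positivity
    have hlog : Real.log (pJ t (t i).1 (t i).2 / p1 t (t i).1) = 0 := by
      rcases mul_eq_zero.mp this with h' | h'
      · exact absurd h' (ne_of_gt hpJ)
      · exact h'
    have hratio : pJ t (t i).1 (t i).2 / p1 t (t i).1 = 1 := by
      have := Real.exp_log (div_pos hpJ hp1)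
      rw [hlog, Real.exp_zero] at this
      linarith
    have heq : pJ t (t i).1 (t i).2 = p1 t (t i).1 := by
      field_simp at hratio; linarith
    have hcnteq : cnt t (t i).1 (t i).2 = c1 t (t i).1 := by
      unfold pJ p1 at heq
      have : (cnt t (t i).1 (t i).2 : ℝ) = c1 t (t i).1 := by
        field_simp at heq; exact_mod_cast heq
      exact_mod_cast this
    -- filters equal
    have hfeq : (Finset.univ.filter fun k => t k = ((t i).1, (t i).2)) =
        (Finset.univ.filter fun k => (t k).1 = (t i).1) :=
      Finset.eq_of_subset_of_card_le (hsub _ _) (le_of_eq hcnteq.symm)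
    have hjmem : j ∈ (Finset.univ.filter fun k => (t k).1 = (t i).1) :=
      Finset.mem_filter.mpr ⟨Finset.mem_univ j, hij.symm⟩
    rw [← hfeq] at hjmem
    rw [Finset.mem_filter] at hjmem
    have : t j = t i := by rw [hjmem.2]
    rw [this]
  · -- FD → all terms zero
    intro hFD ab hab
    obtain ⟨i, _, hi⟩ := Finset.mem_image.mp hab
    subst hi
    have hcnteq : cnt t (t i).1 (t i).2 = c1 t (t i).1 := by
      unfold cnt c1
      congr 1
      apply Finset.filter_congr
      intro k _
      constructor
      · intro h; rw [h]
      · intro h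
        have := hFD k i h
        exact Prod.ext h this
    have : pJ t (t i).1 (t i).2 / p1 t (t i).1 = 1 := by
      unfold pJ p1
      rw [hcnteq]
      have hc1 : 0 < c1 t (t i).1 := by
        apply Finset.card_pos.mpr
        exact ⟨i, by simp⟩
      have : (0:ℝ) < c1 t (t i).1 := by exact_mod_cast hc1
      field_simp
    rw [this, Real.log_one, mul_zero]

end AFD
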